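/- arXiv:1911.00613 — 2 statements merged into one kernel-verified Lean document; each statement's English description precedes it below -/
import Mathlib

section
/- Let (𝒫,ℐ) be a complete cotorsion pair in ℰ. Then the pair (𝒫_Sp, ℐ_Sp) in Span(ℰ) is complete: every object X of Span(ℰ) fits into a short exact sequence 0 → I → P → X → 0 in Span(ℰ) with I ∈ ℐ_Sp and P ∈ 𝒫_Sp, and into a short exact sequence 0 → X → I′ → P′ → 0 in Span(ℰ) with I′ ∈ ℐ_Sp and P′ ∈ 𝒫_Sp. -/
open CategoryTheory CategoryTheory.Limits

universe v u

variable {𝒜 : Type u} [Category.{v} 𝒜] [Abelian 𝒜]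

/-- `(f, g)` forms a short exact sequence `0 ⟶ X ⟶ Y ⟶ Z ⟶ 0` in the ambient
abelian category `𝒜`. -/
def IsShortExactSeq {X Y Z : 𝒜} (f : X ⟶ Y) (g : Y ⟶ Z) : Prop :=
  ∃ w : f ≫ g = 0, (ShortComplex.mk f g w).ShortExact

/-- A class of objects is closed under isomorphisms. -/
def IsoClosed (P : 𝒜 → Prop) : Prop := ∀ ⦃X Y : 𝒜⦄, (X ≅ Y) → P X → P Y

/-- `Ext¹(X, Y) = 0` relative to the exact subcategory determined by `E`:
every short exact sequence `0 ⟶ Y ⟶ M ⟶ X ⟶ 0` in `E` splits. -/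
def Ext1IsZero (E : 𝒜 → Prop) (X Y : 𝒜) : Prop :=
  ∀ ⦃M : 𝒜⦄ (f : Y ⟶ M) (g : M ⟶ X), E M → IsShortExactSeq f g →
    ∃ r : M ⟶ Y, f ≫ r = 𝟙 Y

/-- `(C, I)` is a cotorsion pair in the exact subcategory of `𝒜` determined by
the class of objects `E`: the two classes are each other's orthogonal
complement with respect to `Ext¹`. -/
structure IsCotorsionPair (E C I : 𝒜 → Prop) : Prop where
  right_eq : ∀ Y, I Y ↔ (E Y ∧ ∀ ⦃X⦄, C X → Ext1IsZero E X Y)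
  left_eq : ∀ X, C X ↔ (E X ∧ ∀ ⦃Y⦄, I Y → Ext1IsZero E X Y)

/-- The cotorsion pair `(C, I)` in `E` is complete: every object of `E` admits
both kinds of approximation sequences. -/
def IsCompleteCP (E C I : 𝒜 → Prop) : Prop :=
  (∀ A, E A → ∃ (Y P : 𝒜) (f : A ⟶ Y) (g : Y ⟶ P),
      I Y ∧ C P ∧ IsShortExactSeq f g) ∧
  (∀ A, E A → ∃ (Y P : 𝒜) (f : Y ⟶ P) (g : P ⟶ A),
      I Y ∧ C P ∧ IsShortExactSeq f g)

/-- The cotorsion pair is hereditary: `C` is closed under kernels of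
admissible epimorphisms in `E`. -/
def IsHereditaryCP (E C : 𝒜 → Prop) : Prop :=
  ∀ ⦃X Y Z : 𝒜⦄ (f : X ⟶ Y) (g : Y ⟶ Z),
    IsShortExactSeq f g → E X → C Y → C Z → C X

/-- A cofibration: an admissible monomorphism between objects of `C` whose
cokernel lies in `C`. -/
def IsCofib (C : 𝒜 → Prop) {X Y : 𝒜} (f : X ⟶ Y) : Prop :=
  C X ∧ C Y ∧ ∃ (W : 𝒜) (g : Y ⟶ W), C W ∧ IsShortExactSeq f g

/-- An acyclic fibration: an admissible epimorphism in `E` whose kernel lies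
in `I`. -/
def IsAcyclicFib (E I : 𝒜 → Prop) {Y Z : 𝒜} (g : Y ⟶ Z) : Prop :=
  E Y ∧ E Z ∧ ∃ (K : 𝒜) (k : K ⟶ Y), I K ∧ IsShortExactSeq k g

/-- An acyclic cofibration: an admissible monomorphism between objects of `C`
whose cokernel lies in `C ∩ Z`. -/
def IsAcyclicCofib (C Zc : 𝒜 → Prop) {X Y : 𝒜} (f : X ⟶ Y) : Prop :=
  C X ∧ C Y ∧ ∃ (W : 𝒜) (g : Y ⟶ W), C W ∧ Zc W ∧ IsShortExactSeq f g

/-- A weak equivalence: a morphism between objects of `C` that factors as an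
acyclic cofibration followed by an acyclic fibration. -/
def IsWeakEquiv (E C I Zc : 𝒜 → Prop) {X Y : 𝒜} (f : X ⟶ Y) : Prop :=
  C X ∧ C Y ∧ ∃ (M : 𝒜) (i : X ⟶ M) (p : M ⟶ Y),
    IsAcyclicCofib C Zc i ∧ IsAcyclicFib E I p ∧ i ≫ p = f

/-- The standing setup: a complete hereditary cotorsion pair `(Cc, Ip)` in the
exact subcategory of `𝒜` determined by the isomorphism-closed,
extension-closed class `E`, together with an isomorphism-closed class
`Zc ⊆ E` with `Ip ⊆ Zc`, such that `Zc ∩ Cc` is closed under extensions and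
under cokernels of admissible monomorphisms in `Cc`. -/
structure CotorsionSetup (E Cc Ip Zc : 𝒜 → Prop) : Prop where
  isoE : IsoClosed E
  isoC : IsoClosed Cc
  isoI : IsoClosed Ip
  isoZ : IsoClosed Zc
  extClosedE : ∀ ⦃X Y Z : 𝒜⦄ (f : X ⟶ Y) (g : Y ⟶ Z),
    IsShortExactSeq f g → E X → E Z → E Y
  cp : IsCotorsionPair E Cc Ip
  complete : IsCompleteCP E Cc Ip
  hereditary : IsHereditaryCP E Cc
  zSubE : ∀ ⦃X⦄, Zc X → E X
  iSubZ : ∀ ⦃X⦄, Ip X → Zc X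
  zcExtClosed : ∀ ⦃X Y Z : 𝒜⦄ (f : X ⟶ Y) (g : Y ⟶ Z), IsShortExactSeq f g →
    Cc X → Cc Y → Cc Z → Zc X → Zc Z → Zc Y
  zcCokerClosed : ∀ ⦃X Y Z : 𝒜⦄ (f : X ⟶ Y) (g : Y ⟶ Z), IsShortExactSeq f g →
    Cc X → Cc Y → Cc Z → Zc X → Zc Y → Zc Z

/-- A span (an object of `WalkingSpan ⥤ 𝒜`) lies in `Span(E)`: all three of
its objects lie in `E`. -/
def InSpan (E : 𝒜 → Prop) (X : WalkingSpan ⥤ 𝒜) : Prop :=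
  ∀ j, E (X.obj j)

/-- The class `𝒫_Sp` of spans `C ← A →ⁱ B` with `A, B, C ∈ P` and `i` an
admissible monomorphism with cokernel in `P`. -/
def PSp (P : 𝒜 → Prop) (X : WalkingSpan ⥤ 𝒜) : Prop :=
  P (X.obj WalkingSpan.zero) ∧ P (X.obj WalkingSpan.left) ∧
  P (X.obj WalkingSpan.right) ∧
  ∃ (W : 𝒜) (q : X.obj WalkingSpan.right ⟶ W), P W ∧
    IsShortExactSeq (X.map WalkingSpan.Hom.snd) q

/-- The class `ℐ_Sp` of spans `C ←ᵖ A → B` with `A, B, C ∈ I` and `p` an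
admissible epimorphism with kernel in `I`. -/
def ISp (I : 𝒜 → Prop) (X : WalkingSpan ⥤ 𝒜) : Prop :=
  I (X.obj WalkingSpan.zero) ∧ I (X.obj WalkingSpan.left) ∧
  I (X.obj WalkingSpan.right) ∧
  ∃ (K : 𝒜) (k : K ⟶ X.obj WalkingSpan.zero), I K ∧
    IsShortExactSeq k (X.map WalkingSpan.Hom.fst)

section SpanHelpers

attribute [simp] pullback.lift_fst pullback.lift_snd pushout.inl_desc pushout.inr_desc
attribute [simp] pullback.lift_fst_assoc pullback.lift_snd_assoc pushout.inl_desc_assoc pushout.inr_desc_assoc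






namespace IsShortExactSeq

variable {X Y Z : 𝒜} {f : X ⟶ Y} {g : Y ⟶ Z}

lemma w (h : IsShortExactSeq f g) : f ≫ g = 0 := h.1

lemma mono (h : IsShortExactSeq f g) : Mono f := h.2.mono_f

lemma epi (h : IsShortExactSeq f g) : Epi g := h.2.epi_g

lemma lift (h : IsShortExactSeq f g) {W : 𝒜} (t : W ⟶ Y) (ht : t ≫ g = 0) :
    ∃ l : W ⟶ X, l ≫ f = t := by
  obtain ⟨w, H⟩ := h
  haveI := H.mono_f
  obtain ⟨l, hl⟩ := KernelFork.IsLimit.lift' H.fIsKernel t ht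
  exact ⟨l, by simpa using hl⟩

lemma desc (h : IsShortExactSeq f g) {W : 𝒜} (t : Y ⟶ W) (ht : f ≫ t = 0) :
    ∃ l : Z ⟶ W, g ≫ l = t := by
  obtain ⟨w, H⟩ := h
  haveI := H.epi_g
  obtain ⟨l, hl⟩ := CokernelCofork.IsColimit.desc' H.gIsCokernel t ht
  exact ⟨l, by simpa using hl⟩

lemma of_f_is_kernel (w : f ≫ g = 0) (hf : Mono f) (hg : Epi g)
    (lift : ∀ {W : 𝒜} (t : W ⟶ Y), t ≫ g = 0 → ∃ l : W ⟶ X, l ≫ f = t) :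
    IsShortExactSeq f g := by
  refine ⟨w, ShortComplex.ShortExact.mk' ?_ hf hg⟩
  refine ShortComplex.exact_of_f_is_kernel _ (KernelFork.IsLimit.ofι' f w ?_)
  exact fun t ht => ⟨(lift t ht).choose, (lift t ht).choose_spec⟩

lemma of_g_is_cokernel (w : f ≫ g = 0) (hf : Mono f) (hg : Epi g)
    (desc : ∀ {W : 𝒜} (t : Y ⟶ W), f ≫ t = 0 → ∃ l : Z ⟶ W, g ≫ l = t) :
    IsShortExactSeq f g := by
  refine ⟨w, ShortComplex.ShortExact.mk' ?_ hf hg⟩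
  refine ShortComplex.exact_of_g_is_cokernel _ (CokernelCofork.IsColimit.ofπ' g w ?_)
  exact fun t ht => ⟨(desc t ht).choose, (desc t ht).choose_spec⟩

lemma section_of_retraction (h : IsShortExactSeq f g) {r : Y ⟶ X} (hr : f ≫ r = 𝟙 X) :
    ∃ s : Z ⟶ Y, s ≫ g = 𝟙 Z := by
  obtain ⟨w, H⟩ := h
  have sp := ShortComplex.Splitting.ofExactOfRetraction (ShortComplex.mk f g w)
    H.exact r hr H.epi_g
  exact ⟨sp.s, sp.s_g⟩

lemma retraction_of_section (h : IsShortExactSeq f g) {s : Z ⟶ Y} (hs : s ≫ g = 𝟙 Z) :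
    ∃ r : Y ⟶ X, f ≫ r = 𝟙 X := by
  obtain ⟨w, H⟩ := h
  have sp := ShortComplex.Splitting.ofExactOfSection (ShortComplex.mk f g w)
    H.exact s hs H.mono_f
  exact ⟨sp.r, sp.f_r⟩

end IsShortExactSeq

section SES
variable {K M T Z A W Y : 𝒜}

/-- Pulling back a short exact sequence along `u : Z ⟶ T`. -/
lemma ses_pullback {k : K ⟶ M} {g : M ⟶ T} (h : IsShortExactSeq k g) (u : Z ⟶ T) :
    IsShortExactSeq (pullback.lift k 0 (by simp [h.w]) : K ⟶ pullback g u)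
      (pullback.snd g u) := by
  haveI := h.epi
  haveI := h.mono
  have hm : Mono (pullback.lift k 0 (by simp [h.w]) : K ⟶ pullback g u) := by
    have : (pullback.lift k 0 (by simp [h.w]) : K ⟶ pullback g u) ≫ pullback.fst g u = k :=
      pullback.lift_fst _ _ _
    exact mono_of_mono_fac this
  refine IsShortExactSeq.of_f_is_kernel (by simp) hm inferInstance ?_
  intro W t ht
  have h1 : (t ≫ pullback.fst g u) ≫ g = 0 := by
    rw [Category.assoc, pullback.condition, ← Category.assoc, ht, zero_comp]
  obtain ⟨l, hl⟩ := h.lift _ h1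
  refine ⟨l, pullback.hom_ext ?_ ?_⟩
  · simpa [hl]
  · simp [ht]

/-- Pushing out a short exact sequence along `u : A ⟶ Y`. -/
lemma ses_pushout {m : A ⟶ M} {c : M ⟶ W} (h : IsShortExactSeq m c) (u : A ⟶ Y) :
    IsShortExactSeq (pushout.inl u m)
      (pushout.desc 0 c (by simp [h.w]) : pushout u m ⟶ W) := by
  haveI := h.epi
  haveI := h.mono
  have he : Epi (pushout.desc 0 c (by simp [h.w]) : pushout u m ⟶ W) := by
    have : pushout.inr u m ≫ (pushout.desc 0 c (by simp [h.w]) : pushout u m ⟶ W) = c :=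
      pushout.inr_desc _ _ _
    exact epi_of_epi_fac this
  refine IsShortExactSeq.of_g_is_cokernel (by simp) inferInstance he ?_
  intro T t ht
  have h1 : m ≫ (pushout.inr u m ≫ t) = 0 := by
    rw [← Category.assoc, ← pushout.condition, Category.assoc, ht, comp_zero]
  obtain ⟨l, hl⟩ := h.desc _ h1
  refine ⟨l, pushout.hom_ext ?_ ?_⟩
  · simpa using ht.symm
  · simpa [hl]

/-- Composite of admissible monos: cokernel via pushout. -/
lemma ses_comp_mono {W1 W2 N : 𝒜} {m₁ : A ⟶ M} {c₁ : M ⟶ W1} {m₂ : M ⟶ N} {c₂ : N ⟶ W2}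
    (h₁ : IsShortExactSeq m₁ c₁) (h₂ : IsShortExactSeq m₂ c₂) :
    IsShortExactSeq (m₁ ≫ m₂) (pushout.inr c₁ m₂) := by
  haveI := h₁.mono; haveI := h₂.mono; haveI := h₁.epi; haveI := h₂.epi
  have w : (m₁ ≫ m₂) ≫ pushout.inr c₁ m₂ = 0 := by
    rw [Category.assoc, ← pushout.condition, ← Category.assoc, h₁.w, zero_comp]
  refine IsShortExactSeq.of_g_is_cokernel w inferInstance inferInstance ?_
  intro T t ht
  have h1 : m₁ ≫ (m₂ ≫ t) = 0 := by rw [← Category.assoc]; exact ht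
  obtain ⟨ψ, hψ⟩ := h₁.desc _ h1
  refine ⟨pushout.desc ψ t hψ, pushout.inr_desc _ _ _⟩

/-- Composite of admissible epis: kernel via pullback. -/
lemma ses_comp_epi {K1 K2 N : 𝒜} {k₁ : K1 ⟶ M} {g₁ : M ⟶ N} {k₂ : K2 ⟶ N} {g₂ : N ⟶ T}
    (h₁ : IsShortExactSeq k₁ g₁) (h₂ : IsShortExactSeq k₂ g₂) :
    IsShortExactSeq (pullback.fst g₁ k₂) (g₁ ≫ g₂) := by
  haveI := h₁.mono; haveI := h₂.mono; haveI := h₁.epi; haveI := h₂.epi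
  have w : pullback.fst g₁ k₂ ≫ g₁ ≫ g₂ = 0 := by
    rw [← Category.assoc, pullback.condition, Category.assoc, h₂.w, comp_zero]
  refine IsShortExactSeq.of_f_is_kernel w inferInstance inferInstance ?_
  intro W t ht
  obtain ⟨ψ, hψ⟩ := h₂.lift (t ≫ g₁) (by rw [Category.assoc]; exact ht)
  exact ⟨pullback.lift t ψ hψ.symm, pullback.lift_fst _ _ _⟩

/-- Pushout of an admissible epi along an admissible mono. -/
lemma ses_pushout_epi {Y1 Y2 : 𝒜} {a : Y1 ⟶ K} {b : K ⟶ Y2} (h₁ : IsShortExactSeq a b)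
    {M : 𝒜} (ι : K ⟶ M) (hι : Mono ι) :
    IsShortExactSeq (a ≫ ι) (pushout.inr b ι) := by
  haveI := h₁.mono; haveI := h₁.epi; haveI := hι
  have w : (a ≫ ι) ≫ pushout.inr b ι = 0 := by
    rw [Category.assoc, ← pushout.condition, ← Category.assoc, h₁.w, zero_comp]
  refine IsShortExactSeq.of_g_is_cokernel w inferInstance inferInstance ?_
  intro T t ht
  obtain ⟨ψ, hψ⟩ := h₁.desc (ι ≫ t) (by rw [← Category.assoc]; exact ht)
  exact ⟨pushout.desc ψ t hψ, pushout.inr_desc _ _ _⟩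

/-- Pullback of an admissible mono along an admissible epi. -/
lemma ses_pullback_mono {P1 P2 : 𝒜} {a : P1 ⟶ M} {b : M ⟶ P2} (h₁ : IsShortExactSeq a b)
    {N : 𝒜} (g : N ⟶ M) (hg : Epi g) :
    IsShortExactSeq (pullback.fst g a) (g ≫ b) := by
  haveI := h₁.mono; haveI := h₁.epi; haveI := hg
  have w : pullback.fst g a ≫ g ≫ b = 0 := by
    rw [← Category.assoc, pullback.condition, Category.assoc, h₁.w, comp_zero]
  refine IsShortExactSeq.of_f_is_kernel w inferInstance inferInstance ?_
  intro W t ht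
  obtain ⟨ψ, hψ⟩ := h₁.lift (t ≫ g) (by rw [Category.assoc]; exact ht)
  exact ⟨pullback.lift t ψ hψ.symm, pullback.lift_fst _ _ _⟩

/-- The split short exact sequence of a binary biproduct. -/
lemma ses_biprod (Y Z : 𝒜) :
    IsShortExactSeq (biprod.inl : Y ⟶ Y ⊞ Z) (biprod.snd : Y ⊞ Z ⟶ Z) := by
  refine IsShortExactSeq.of_f_is_kernel (by simp) inferInstance inferInstance ?_
  intro W t ht
  refine ⟨t ≫ biprod.fst, ?_⟩
  have := biprod.total (X := Y) (Y := Z)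
  calc (t ≫ biprod.fst) ≫ biprod.inl
      = t ≫ (biprod.fst ≫ biprod.inl + biprod.snd ≫ biprod.inr) := by
        rw [Preadditive.comp_add]
        simp [reassoc_of% ht]
    _ = t := by rw [this, Category.comp_id]

end SES

section BP
variable {X I P Z K M T : 𝒜}

/-- Factorisation lemma: the mono `biprod.lift v e` is admissible with cokernel an
extension of `P` by `Z`. -/
lemma ses_lift {e : X ⟶ I} {π : I ⟶ P} (h : IsShortExactSeq e π) (v : X ⟶ Z) :
    ∃ (W : 𝒜) (c : Z ⊞ I ⟶ W) (ζ : Z ⟶ W) (ω : W ⟶ P),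
      IsShortExactSeq (biprod.lift v e) c ∧ IsShortExactSeq ζ ω := by
  haveI := h.mono; haveI := h.epi
  refine ⟨pushout v e, biprod.desc (pushout.inl v e) (-pushout.inr v e),
    pushout.inl v e, pushout.desc 0 π (by simp [h.w]), ?_, ses_pushout h v⟩
  have w : biprod.lift v e ≫ biprod.desc (pushout.inl v e) (-pushout.inr v e) = 0 := by
    rw [biprod.lift_desc, Preadditive.comp_neg, pushout.condition, add_neg_cancel]
  have hm : Mono (biprod.lift v e) := by
    have : biprod.lift v e ≫ biprod.snd = e := biprod.lift_snd _ _
    exact mono_of_mono_fac this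
  have he : Epi (biprod.desc (pushout.inl v e) (-pushout.inr v e)) := by
    constructor
    intro T x y hxy
    have h1 := biprod.inl ≫= hxy
    have h2 := biprod.inr ≫= hxy
    simp only [biprod.inl_desc_assoc] at h1
    simp only [biprod.inr_desc_assoc, Preadditive.neg_comp, neg_inj] at h2
    exact pushout.hom_ext h1 h2
  refine IsShortExactSeq.of_g_is_cokernel w hm he ?_
  intro T t ht
  have hdec : t = biprod.desc (biprod.inl ≫ t) (biprod.inr ≫ t) := by
    apply biprod.hom_ext' <;> simp
  have ht' : v ≫ (biprod.inl ≫ t) + e ≫ (biprod.inr ≫ t) = 0 := by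
    rw [← biprod.lift_desc, ← hdec, ht]
  have hcomp : v ≫ (biprod.inl ≫ t) = e ≫ (-(biprod.inr ≫ t)) := by
    rw [Preadditive.comp_neg]; exact eq_neg_of_add_eq_zero_left ht'
  refine ⟨pushout.desc (biprod.inl ≫ t) (-(biprod.inr ≫ t)) hcomp, ?_⟩
  conv_rhs => rw [hdec]
  apply biprod.hom_ext' <;> simp

/-- Dual factorisation lemma: the epi `biprod.desc ρ w` is admissible with kernel an
extension of `Z` by `K`. -/
lemma ses_desc {k : K ⟶ M} {ρ : M ⟶ T} (h : IsShortExactSeq k ρ) (w : Z ⟶ T) :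
    ∃ (V : 𝒜) (ι : V ⟶ M ⊞ Z) (α : K ⟶ V) (β : V ⟶ Z),
      IsShortExactSeq ι (biprod.desc ρ w) ∧ IsShortExactSeq α β := by
  haveI := h.mono; haveI := h.epi
  refine ⟨pullback ρ w, biprod.lift (pullback.fst ρ w) (-pullback.snd ρ w),
    pullback.lift k 0 (by simp [h.w]), pullback.snd ρ w, ?_, ses_pullback h w⟩
  have hw : biprod.lift (pullback.fst ρ w) (-pullback.snd ρ w) ≫ biprod.desc ρ w = 0 := by
    rw [biprod.lift_desc, Preadditive.neg_comp, pullback.condition, add_neg_cancel]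
  have hm : Mono (biprod.lift (pullback.fst ρ w) (-pullback.snd ρ w)) := by
    constructor
    intro T x y hxy
    have h1 := hxy =≫ biprod.fst
    have h2 := hxy =≫ biprod.snd
    simp only [Category.assoc, biprod.lift_fst] at h1
    simp only [Category.assoc, biprod.lift_snd, Preadditive.comp_neg, neg_inj] at h2
    exact pullback.hom_ext h1 h2
  have he : Epi (biprod.desc ρ w) := by
    have : biprod.inl ≫ biprod.desc ρ w = ρ := biprod.inl_desc _ _
    exact epi_of_epi_fac this
  refine IsShortExactSeq.of_f_is_kernel hw hm he ?_
  intro W t ht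
  have hdec : t = biprod.lift (t ≫ biprod.fst) (t ≫ biprod.snd) := by
    apply biprod.hom_ext <;> simp
  have ht' : (t ≫ biprod.fst) ≫ ρ + (t ≫ biprod.snd) ≫ w = 0 := by
    rw [← biprod.lift_desc, ← hdec, ht]
  have hcomp : (t ≫ biprod.fst) ≫ ρ = (-(t ≫ biprod.snd)) ≫ w := by
    rw [Preadditive.neg_comp]; exact eq_neg_of_add_eq_zero_left ht'
  refine ⟨pullback.lift (t ≫ biprod.fst) (-(t ≫ biprod.snd)) hcomp, ?_⟩
  conv_rhs => rw [hdec]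
  apply biprod.hom_ext <;> simp
end BP

section CP
variable {E P I : 𝒜 → Prop}

lemma mem_E_of_P (hCP : IsCotorsionPair E P I) {X : 𝒜} (h : P X) : E X :=
  ((hCP.left_eq X).1 h).1

lemma mem_E_of_I (hCP : IsCotorsionPair E P I) {X : 𝒜} (h : I X) : E X :=
  ((hCP.right_eq X).1 h).1

variable (hCP : IsCotorsionPair E P I)
  (hEext : ∀ ⦃X Y Z : 𝒜⦄ (f : X ⟶ Y) (g : Y ⟶ Z),
      IsShortExactSeq f g → E X → E Z → E Y)

include hCP hEext

/-- Lifting a map from a `P`-object through an admissible epi with kernel in `I`. -/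
lemma lift_through {X K M T : 𝒜} {k : K ⟶ M} {g : M ⟶ T}
    (hX : P X) (hK : I K) (h : IsShortExactSeq k g) (u : X ⟶ T) :
    ∃ v : X ⟶ M, v ≫ g = u := by
  have hext : Ext1IsZero E X K := ((hCP.right_eq K).1 hK).2 hX
  have hses := ses_pullback h u
  have hE : E (pullback g u) := hEext _ _ hses (mem_E_of_I hCP hK) (mem_E_of_P hCP hX)
  obtain ⟨r, hr⟩ := hext _ _ hE hses
  obtain ⟨s, hs⟩ := hses.section_of_retraction hr
  refine ⟨s ≫ pullback.fst g u, ?_⟩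
  rw [Category.assoc, pullback.condition, ← Category.assoc, hs, Category.id_comp]

/-- Extending a map to an `I`-object along an admissible mono with cokernel in `P`. -/
lemma extend_through {Y A M W : 𝒜} {m : A ⟶ M} {c : M ⟶ W}
    (hY : I Y) (hW : P W) (h : IsShortExactSeq m c) (u : A ⟶ Y) :
    ∃ v : M ⟶ Y, m ≫ v = u := by
  have hext : Ext1IsZero E W Y := ((hCP.left_eq W).1 hW).2 hY
  have hses := ses_pushout h u
  have hE : E (pushout u m) := hEext _ _ hses (mem_E_of_I hCP hY) (mem_E_of_P hCP hW)
  obtain ⟨r, hr⟩ := hext _ _ hE hses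
  refine ⟨pushout.inr u m ≫ r, ?_⟩
  rw [← Category.assoc, ← pushout.condition, Category.assoc, hr, Category.comp_id]

/-- The right class `I` is closed under extensions. -/
lemma I_ext_closed {Y1 K Y2 : 𝒜} {a : Y1 ⟶ K} {b : K ⟶ Y2}
    (h1 : I Y1) (h2 : I Y2) (h : IsShortExactSeq a b) : I K := by
  rw [hCP.right_eq]
  refine ⟨hEext _ _ h (mem_E_of_I hCP h1) (mem_E_of_I hCP h2), ?_⟩
  intro X hX M0 ι g hEM hses2
  have hmι := hses2.mono
  have hses3 := ses_pushout hses2 b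
  have hEPo : E (pushout b ι) := hEext _ _ hses3 (mem_E_of_I hCP h2) (mem_E_of_P hCP hX)
  obtain ⟨r₂, hr₂⟩ := ((hCP.right_eq Y2).1 h2).2 hX _ _ hEPo hses3
  obtain ⟨s₂, hs₂⟩ := hses3.section_of_retraction hr₂
  have hses4 := ses_pushout_epi h ι hmι
  have hses5 := ses_pullback hses4 s₂
  have hEPb : E (pullback (pushout.inr b ι) s₂) :=
    hEext _ _ hses5 (mem_E_of_I hCP h1) (mem_E_of_P hCP hX)
  obtain ⟨r₁, hr₁⟩ := ((hCP.right_eq Y1).1 h1).2 hX _ _ hEPb hses5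
  obtain ⟨s₁, hs₁⟩ := hses5.section_of_retraction hr₁
  have hsg : (s₁ ≫ pullback.fst (pushout.inr b ι) s₂) ≫ g = 𝟙 X := by
    have hg : g = pushout.inr b ι ≫ pushout.desc 0 g (by simp [hses2.w]) := by
      rw [pushout.inr_desc]
    rw [Category.assoc, hg, ← Category.assoc (pullback.fst _ _), pullback.condition]
    simp only [Category.assoc]
    rw [reassoc_of% hs₁, hs₂]
  obtain ⟨r, hr⟩ := hses2.retraction_of_section hsg
  exact ⟨r, hr⟩

/-- The left class `P` is closed under extensions. -/
lemma P_ext_closed {P1 M P2 : 𝒜} {a : P1 ⟶ M} {b : M ⟶ P2}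
    (h1 : P P1) (h2 : P P2) (h : IsShortExactSeq a b) : P M := by
  rw [hCP.left_eq]
  refine ⟨hEext _ _ h (mem_E_of_P hCP h1) (mem_E_of_P hCP h2), ?_⟩
  intro Y hY N ι g hEN hses2
  have heg := hses2.epi
  have hses3 := ses_pullback hses2 a
  have hEN1 : E (pullback g a) := hEext _ _ hses3 (mem_E_of_I hCP hY) (mem_E_of_P hCP h1)
  obtain ⟨r₁, hr₁⟩ := ((hCP.left_eq P1).1 h1).2 hY _ _ hEN1 hses3
  have hses4 := ses_pullback_mono h g heg
  obtain ⟨v, hv⟩ := extend_through hCP hEext hY h2 hses4 r₁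
  refine ⟨v, ?_⟩
  have hfac : (pullback.lift ι 0 (by simp [hses2.w]) : Y ⟶ pullback g a) ≫
      pullback.fst g a = ι := pullback.lift_fst _ _ _
  rw [← hfac, Category.assoc, hv, hr₁]

end CP

/-- Construct a natural transformation between functors on the walking span. -/
def mkSpanHom (F G : WalkingSpan ⥤ 𝒜)
    (z : F.obj WalkingSpan.zero ⟶ G.obj WalkingSpan.zero)
    (l : F.obj WalkingSpan.left ⟶ G.obj WalkingSpan.left)
    (r : F.obj WalkingSpan.right ⟶ G.obj WalkingSpan.right)
    (hf : F.map WalkingSpan.Hom.fst ≫ l = z ≫ G.map WalkingSpan.Hom.fst)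
    (hs : F.map WalkingSpan.Hom.snd ≫ r = z ≫ G.map WalkingSpan.Hom.snd) : F ⟶ G where
  app j := match j with
    | WalkingSpan.zero => z
    | WalkingSpan.left => l
    | WalkingSpan.right => r
  naturality := by
    intro i j m
    change WidePushoutShape.Hom i j at m
    cases m with
    | id _ =>
      have h1 : F.map (WidePushoutShape.Hom.id i) = 𝟙 (F.obj i) := F.map_id i
      have h2 : G.map (WidePushoutShape.Hom.id i) = 𝟙 (G.obj i) := G.map_id i
      rw [h1, h2, Category.id_comp, Category.comp_id]
    | init j => ?_
    cases j
    · exact hf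
    · exact hs

@[simp] lemma mkSpanHom_app_zero (F G : WalkingSpan ⥤ 𝒜) (z l r hf hs) :
    (mkSpanHom F G z l r hf hs).app WalkingSpan.zero = z := rfl
@[simp] lemma mkSpanHom_app_left (F G : WalkingSpan ⥤ 𝒜) (z l r hf hs) :
    (mkSpanHom F G z l r hf hs).app WalkingSpan.left = l := rfl
@[simp] lemma mkSpanHom_app_right (F G : WalkingSpan ⥤ 𝒜) (z l r hf hs) :
    (mkSpanHom F G z l r hf hs).app WalkingSpan.right = r := rfl

/-- A componentwise short exact sequence of functors is short exact. -/
lemma isShortExactSeq_of_app {F G H : WalkingSpan ⥤ 𝒜} (α : F ⟶ G) (β : G ⟶ H)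
    (h : ∀ j, IsShortExactSeq (α.app j) (β.app j)) :
    IsShortExactSeq (α : F ⟶ G) (β : G ⟶ H) := by
  have w : α ≫ β = 0 := by
    ext j
    exact (h j).1
  haveI : ∀ j, Mono (α.app j) := fun j => (h j).2.mono_f
  haveI : ∀ j, Epi (β.app j) := fun j => (h j).2.epi_g
  haveI : Mono α := NatTrans.mono_of_mono_app α
  haveI : Epi β := NatTrans.epi_of_epi_app β
  refine ⟨w, ShortComplex.ShortExact.mk' ?_ inferInstance inferInstance⟩
  set S := ShortComplex.mk α β w with hS
  rw [ShortComplex.exact_iff_isZero_homology]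
  apply Functor.isZero
  intro j
  let Ej := (evaluation WalkingSpan 𝒜).obj j
  haveI : Ej.PreservesHomology := {}
  have hexj : (S.map Ej).Exact := (h j).2.exact
  exact IsZero.of_iso ((ShortComplex.exact_iff_isZero_homology _).1 hexj)
    (S.mapHomologyIso Ej).symm

end SpanHelpers

/-- Let `(P, I)` be a complete cotorsion pair in `E`.  Then
the pair `(𝒫_Sp, ℐ_Sp)` in `Span(E)` is complete: every object `X` of
`Span(E)` fits into a short exact sequence `0 → J → Q → X → 0` in `Span(E)`
with `J ∈ ℐ_Sp` and `Q ∈ 𝒫_Sp`, and into a short exact sequence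
`0 → X → J' → Q' → 0` in `Span(E)` with `J' ∈ ℐ_Sp` and `Q' ∈ 𝒫_Sp`. -/
theorem span_cotorsion_pair_complete
    (E P I : 𝒜 → Prop) (hCP : IsCotorsionPair E P I)
    (hcomplete : IsCompleteCP E P I)
    (hEiso : IsoClosed E) (hPiso : IsoClosed P) (hIiso : IsoClosed I)
    (hEext : ∀ ⦃X Y Z : 𝒜⦄ (f : X ⟶ Y) (g : Y ⟶ Z),
      IsShortExactSeq f g → E X → E Z → E Y) :
    ∀ X : WalkingSpan ⥤ 𝒜, InSpan E X →
      (∃ (J Q : WalkingSpan ⥤ 𝒜) (f : J ⟶ Q) (g : Q ⟶ X),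
        ISp I J ∧ PSp P Q ∧ IsShortExactSeq f g) ∧
      (∃ (J' Q' : WalkingSpan ⥤ 𝒜) (f : X ⟶ J') (g : J' ⟶ Q'),
        ISp I J' ∧ PSp P Q' ∧ IsShortExactSeq f g) := by
  intro X hX
  have hA : E (X.obj WalkingSpan.zero) := hX _
  have hC : E (X.obj WalkingSpan.left) := hX _
  have hB : E (X.obj WalkingSpan.right) := hX _
  constructor
  · -- special precover of the span X
    obtain ⟨I_C, P_C, k_C, p_C, hIC, hPC, ses1⟩ := hcomplete.2 _ hC
    have sesD := ses_pullback ses1 (X.map WalkingSpan.Hom.fst)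
    have hED : E (pullback p_C (X.map WalkingSpan.Hom.fst)) :=
      hEext _ _ sesD (mem_E_of_I hCP hIC) hA
    obtain ⟨I_D, Q_A, k_D, q, hID, hQA, ses2⟩ := hcomplete.2 _ hED
    have ses3 := ses_comp_epi ses2 sesD
    have ses4 := ses_pullback ses2 (pullback.lift k_C 0 (by simp [ses1.w]))
    have hJA : I (pullback q (pullback.lift k_C 0 (by simp [ses1.w]))) :=
      I_ext_closed hCP hEext hID hIC ses4
    -- the right vertex
    obtain ⟨I0, P0, e, π0, hI0, hP0, ses5⟩ := hcomplete.1 _ (mem_E_of_P hCP hQA)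
    have hI0P : P I0 := P_ext_closed hCP hEext hQA hP0 ses5
    obtain ⟨I_B, P_B, k_B, rB, hIB, hPB, ses6⟩ := hcomplete.2 _ hB
    obtain ⟨vb, hvb⟩ := lift_through hCP hEext hQA hIB ses6
      ((q ≫ pullback.snd p_C (X.map WalkingSpan.Hom.fst)) ≫ X.map WalkingSpan.Hom.snd)
    obtain ⟨W, c, ζ, ω, sesM, sesW⟩ := ses_lift ses5 vb
    have hW : P W := P_ext_closed hCP hEext hPB hP0 sesW
    obtain ⟨V, ι, α, β, sesP, sesV⟩ := ses_desc ses6 (0 : I0 ⟶ X.obj WalkingSpan.right)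
    have hV : I V := I_ext_closed hCP hEext hIB hI0 sesV
    have hQB : P (P_B ⊞ I0) := P_ext_closed hCP hEext hPB hI0P (ses_biprod P_B I0)
    have hmp : (biprod.lift vb e) ≫ biprod.desc rB 0 =
        (q ≫ pullback.snd p_C (X.map WalkingSpan.Hom.fst)) ≫ X.map WalkingSpan.Hom.snd := by
      rw [biprod.lift_desc, comp_zero, add_zero, hvb]
    have hker : ((pullback.fst q (pullback.lift k_C 0 (by simp [ses1.w]))) ≫
        biprod.lift vb e) ≫ biprod.desc rB 0 = 0 := by
      rw [Category.assoc, hmp, ← Category.assoc, ses3.w]; simp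
    obtain ⟨jB, hjB⟩ := sesP.lift _ hker
    refine ⟨span (pullback.snd q (pullback.lift k_C 0 (by simp [ses1.w]))) jB,
      span (q ≫ pullback.fst p_C (X.map WalkingSpan.Hom.fst)) (biprod.lift vb e),
      mkSpanHom _ _ (pullback.fst q (pullback.lift k_C 0 (by simp [ses1.w]))) k_C ι ?_ ?_,
      mkSpanHom _ _ (q ≫ pullback.snd p_C (X.map WalkingSpan.Hom.fst)) p_C
        (biprod.desc rB 0) ?_ ?_, ?_, ?_, ?_⟩
    · -- J ⟶ Q naturality at fst
      show pullback.snd q _ ≫ k_C = pullback.fst q _ ≫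
        (q ≫ pullback.fst p_C (X.map WalkingSpan.Hom.fst))
      rw [← Category.assoc, pullback.condition, Category.assoc, pullback.lift_fst]
    · -- J ⟶ Q naturality at snd
      show jB ≫ ι = pullback.fst q _ ≫ biprod.lift vb e
      exact hjB
    · -- Q ⟶ X naturality at fst
      show (q ≫ pullback.fst p_C (X.map WalkingSpan.Hom.fst)) ≫ p_C =
        (q ≫ pullback.snd p_C (X.map WalkingSpan.Hom.fst)) ≫ X.map WalkingSpan.Hom.fst
      rw [Category.assoc, pullback.condition, Category.assoc]
    · -- Q ⟶ X naturality at snd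
      show biprod.lift vb e ≫ biprod.desc rB 0 =
        (q ≫ pullback.snd p_C (X.map WalkingSpan.Hom.fst)) ≫ X.map WalkingSpan.Hom.snd
      exact hmp
    · -- ISp
      exact ⟨hJA, hIC, hV, I_D, pullback.lift k_D 0 (by simp [ses2.w]), hID, ses4⟩
    · -- PSp
      exact ⟨hQA, hPC, hQB, W, c, hW, sesM⟩
    · -- short exactness
      refine isShortExactSeq_of_app _ _ ?_
      intro j
      rcases j with _ | j
      · exact ses3
      · rcases j with _ | _
        · exact ses1
        · exact sesP
  · -- special preenvelope of the span X
    obtain ⟨I_C', P_C', e_C, π_C, hIC', hPC', ses1'⟩ := hcomplete.1 _ hC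
    obtain ⟨Kst, Pst, kst, ρ, hKst, hPst, ses2'⟩ := hcomplete.2 _ (mem_E_of_I hCP hIC')
    have hPstI : I Pst := I_ext_closed hCP hEext hKst hIC' ses2'
    obtain ⟨IA0, PA0, eA0, πA0, hIA0, hPA0, ses3'⟩ := hcomplete.1 _ hA
    obtain ⟨wm, hwm⟩ := extend_through hCP hEext hIC' hPA0 ses3'
      (X.map WalkingSpan.Hom.fst ≫ e_C)
    obtain ⟨WA, cA, ζA, ωA, sesEA, sesWA⟩ :=
      ses_lift ses3' (0 : X.obj WalkingSpan.zero ⟶ Pst)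
    have hWA : P WA := P_ext_closed hCP hEext hPst hPA0 sesWA
    have hIA' : I (Pst ⊞ IA0) := I_ext_closed hCP hEext hPstI hIA0 (ses_biprod Pst IA0)
    obtain ⟨V', ι', α', β', sesIp', sesV'⟩ := ses_desc ses2' wm
    have hV' : I V' := I_ext_closed hCP hEext hKst hIA0 sesV'
    have heAp' : (biprod.lift 0 eA0) ≫ biprod.desc ρ wm =
        X.map WalkingSpan.Hom.fst ≫ e_C := by
      rw [biprod.lift_desc, zero_comp, zero_add, hwm]
    have sesGB := ses_pushout sesEA (X.map WalkingSpan.Hom.snd)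
    have hEGB : E (pushout (X.map WalkingSpan.Hom.snd) (biprod.lift 0 eA0)) :=
      hEext _ _ sesGB hB (mem_E_of_P hCP hWA)
    obtain ⟨I_G, P_G, e_G, π_G, hIG, hPG, ses4'⟩ := hcomplete.1 _ hEGB
    have ses5' := ses_comp_mono sesGB ses4'
    have ses6' := ses_pushout ses4' (pushout.desc 0 cA (by simp [sesEA.w]))
    have hW' : P (pushout (pushout.desc 0 cA (by simp [sesEA.w])) e_G) :=
      P_ext_closed hCP hEext hWA hPG ses6'
    have hnq0 : (biprod.lift 0 eA0) ≫ (biprod.desc ρ wm ≫ π_C) = 0 := by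
      rw [← Category.assoc, heAp', Category.assoc, ses1'.w, comp_zero]
    obtain ⟨nQ, hnQ⟩ := sesEA.desc _ hnq0
    refine ⟨span (biprod.desc ρ wm)
        (pushout.inr (X.map WalkingSpan.Hom.snd) (biprod.lift 0 eA0) ≫ e_G),
      span nQ (pushout.inl (pushout.desc 0 cA (by simp [sesEA.w])) e_G),
      mkSpanHom _ _ (biprod.lift 0 eA0) e_C
        (pushout.inl (X.map WalkingSpan.Hom.snd) (biprod.lift 0 eA0) ≫ e_G) ?_ ?_,
      mkSpanHom _ _ cA π_C (pushout.inr (pushout.desc 0 cA (by simp [sesEA.w])) e_G) ?_ ?_,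
      ?_, ?_, ?_⟩
    · -- X ⟶ J' naturality at fst
      show X.map WalkingSpan.Hom.fst ≫ e_C = biprod.lift 0 eA0 ≫ biprod.desc ρ wm
      exact heAp'.symm
    · -- X ⟶ J' naturality at snd
      show X.map WalkingSpan.Hom.snd ≫
          (pushout.inl (X.map WalkingSpan.Hom.snd) (biprod.lift 0 eA0) ≫ e_G) =
        biprod.lift 0 eA0 ≫
          (pushout.inr (X.map WalkingSpan.Hom.snd) (biprod.lift 0 eA0) ≫ e_G)
      rw [← Category.assoc, pushout.condition, Category.assoc]
    · -- J' ⟶ Q' naturality at fst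
      show biprod.desc ρ wm ≫ π_C = cA ≫ nQ
      exact hnQ.symm
    · -- J' ⟶ Q' naturality at snd
      show (pushout.inr (X.map WalkingSpan.Hom.snd) (biprod.lift 0 eA0) ≫ e_G) ≫
          pushout.inr (pushout.desc 0 cA (by simp [sesEA.w])) e_G =
        cA ≫ pushout.inl (pushout.desc 0 cA (by simp [sesEA.w])) e_G
      rw [Category.assoc, ← pushout.condition, ← Category.assoc, pushout.inr_desc]
    · -- ISp J'
      exact ⟨hIA', hIC', hIG, V', ι', hV', sesIp'⟩
    · -- PSp Q'
      exact ⟨hWA, hPC', hW', P_G, pushout.desc 0 π_G (by simp [ses4'.w]), hPG, ses6'⟩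
    · -- short exactness
      refine isShortExactSeq_of_app _ _ ?_
      intro j
      rcases j with _ | j
      · exact sesEA
      · rcases j with _ | _
        · exact ses1'
        · exact ses5'
end

section
/- Assume: 𝒞 is closed under kernels of admissible epimorphisms in ℰ; (𝒞,𝒞⊥) is a complete cotorsion pair in ℰ with 𝒞⊥ ⊆ 𝒵; 𝒵 ∩ 𝒞 has the 2-out-of-3 property for short exact sequences in 𝒞; 𝒫 ⊆ 𝒞 is a full subcategory closed under extensions and under kernels of admissible epimorphisms in 𝒞; (𝒫,𝒫⊥) is a complete cotorsion pair in the exact category 𝒫 (orthogonality with respect to short exact sequences in 𝒫) with 𝒫⊥ ⊆ 𝒵; and every object of 𝒞 admits a finite 𝒫-resolution, i.e. an exact sequence 0 → P_n → ⋯ → P_1 → P_0 → A → 0 in 𝒞 with all P_i ∈ 𝒫. Then every object A of 𝒵 ∩ 𝒞 admits a finite resolution 0 → Z_n → ⋯ → Z_1 → Z_0 → A → 0 whose terms Z_i all lie in 𝒵 ∩ 𝒫 and all of whose intermediate syzygies lie in 𝒵. -/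
open CategoryTheory CategoryTheory.Limits

universe v u

variable {𝒜 : Type u} [Category.{v} 𝒜] [Abelian 𝒜]

/-- `A` admits a resolution `0 → B_n → ⋯ → B_1 → B_0 → A → 0` of length `n`
whose terms `B_k` satisfy `P` and whose intermediate syzygies satisfy `Q`:
each map `B_k → B_{k-1}` factors as an admissible epimorphism onto a syzygy
followed by an admissible monomorphism, the syzygies fitting into short exact
sequences `0 → Z_{k+1} → B_k → Z_k → 0`. -/
inductive HasResolution (P Q : 𝒜 → Prop) : ℕ → 𝒜 → Prop
  | base {A B : 𝒜} (f : B ⟶ A) (hB : P B) (hf : IsIso f) :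
      HasResolution P Q 0 A
  | step {n : ℕ} {A B K : 𝒜} (k : K ⟶ B) (g : B ⟶ A) (hB : P B) (hK : Q K)
      (hses : IsShortExactSeq k g) (hrec : HasResolution P Q n K) :
      HasResolution P Q (n + 1) A

section AuxLemmas

variable {𝒜 : Type u} [Category.{v} 𝒜] [Abelian 𝒜]

lemma IsShortExactSeq.mono_s18 {X Y Z : 𝒜} {f : X ⟶ Y} {g : Y ⟶ Z}
    (h : IsShortExactSeq f g) : Mono f := by
  obtain ⟨w, h⟩ := h; exact h.mono_f

lemma IsShortExactSeq.epi_s18 {X Y Z : 𝒜} {f : X ⟶ Y} {g : Y ⟶ Z}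
    (h : IsShortExactSeq f g) : Epi g := by
  obtain ⟨w, h⟩ := h; exact h.epi_g

lemma IsShortExactSeq.zero {X Y Z : 𝒜} {f : X ⟶ Y} {g : Y ⟶ Z}
    (h : IsShortExactSeq f g) : f ≫ g = 0 := h.1

lemma ses_desc_s18 {X Y Z A : 𝒜} {f : X ⟶ Y} {g : Y ⟶ Z} (h : IsShortExactSeq f g)
    (k : Y ⟶ A) (hk : f ≫ k = 0) : ∃ l : Z ⟶ A, g ≫ l = k := by
  obtain ⟨w, h⟩ := h
  have := h.epi_g
  exact ⟨h.exact.desc k hk, h.exact.g_desc k hk⟩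

lemma ses_lift_s18 {X Y Z A : 𝒜} {f : X ⟶ Y} {g : Y ⟶ Z} (h : IsShortExactSeq f g)
    (k : A ⟶ Y) (hk : k ≫ g = 0) : ∃ l : A ⟶ X, l ≫ f = k := by
  obtain ⟨w, h⟩ := h
  have := h.mono_f
  exact ⟨h.exact.lift k hk, h.exact.lift_f k hk⟩

lemma ses_mk {X Y Z : 𝒜} {f : X ⟶ Y} {g : Y ⟶ Z} (w : f ≫ g = 0)
    (hm : Mono f) (he : Epi g) (hc : IsColimit (CokernelCofork.ofπ g w)) :
    IsShortExactSeq f g :=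
  ⟨w, { exact := ShortComplex.exact_of_g_is_cokernel _ hc, mono_f := hm, epi_g := he }⟩

lemma ses_mk_ker {X Y Z : 𝒜} {f : X ⟶ Y} {g : Y ⟶ Z} (w : f ≫ g = 0)
    (hm : Mono f) (he : Epi g) (hl : IsLimit (KernelFork.ofι f w)) :
    IsShortExactSeq f g :=
  ⟨w, { exact := ShortComplex.exact_of_f_is_kernel _ hl, mono_f := hm, epi_g := he }⟩

lemma ses_coker {X Y : 𝒜} (f : X ⟶ Y) (hf : Mono f) :
    IsShortExactSeq f (cokernel.π f) :=
  ses_mk (cokernel.condition f) hf inferInstance (cokernelIsCokernel f)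

lemma ses_of_isPushout {X₁ X₂ X₃ X₄ K : 𝒜} {f : X₁ ⟶ X₂} {g : X₁ ⟶ X₃}
    {inl : X₂ ⟶ X₄} {inr : X₃ ⟶ X₄} (sq : IsPushout f g inl inr)
    {p : X₂ ⟶ K} (hp : IsShortExactSeq f p) :
    ∃ q : X₄ ⟶ K, inl ≫ q = p ∧ IsShortExactSeq inr q := by
  have hmf : Mono f := hp.mono_s18
  have hep : Epi p := hp.epi_s18
  have hw : f ≫ p = g ≫ 0 := by rw [comp_zero, hp.zero]
  refine ⟨sq.desc p 0 hw, sq.inl_desc p 0 hw, ?_⟩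
  set q : X₄ ⟶ K := sq.desc p 0 hw with hq
  have hinl : inl ≫ q = p := sq.inl_desc p 0 hw
  have hinr : inr ≫ q = 0 := sq.inr_desc p 0 hw
  have hmono : Mono inr := by
    rw [← sq.inr_isoPushout_inv]
    exact mono_comp _ _
  have hepi : Epi q := by
    have : Epi (inl ≫ q) := by rw [hinl]; exact hep
    exact epi_of_epi inl q
  refine ses_mk hinr hmono hepi (CokernelCofork.IsColimit.ofπ' q hinr ?_)
  intro T t ht
  have hcond : f ≫ inl ≫ t = 0 := by
    rw [← Category.assoc, sq.w, Category.assoc, ht, comp_zero]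
  have hu := (ses_desc_s18 hp (inl ≫ t) hcond).choose_spec
  refine ⟨(ses_desc_s18 hp (inl ≫ t) hcond).choose, sq.hom_ext ?_ ?_⟩
  · rw [← Category.assoc, hinl, hu]
  · rw [← Category.assoc, hinr, zero_comp, ht]

lemma ses_of_isPullback {P X Y Z K : 𝒜} {fst : P ⟶ X} {snd : P ⟶ Y} {f : X ⟶ Z} {g : Y ⟶ Z}
    (sq : IsPullback fst snd f g) {k : K ⟶ X} (hk : IsShortExactSeq k f) :
    ∃ k' : K ⟶ P, k' ≫ fst = k ∧ IsShortExactSeq k' snd := by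
  have hmk : Mono k := hk.mono_s18
  have hef : Epi f := hk.epi_s18
  have hw : k ≫ f = 0 ≫ g := by rw [zero_comp, hk.zero]
  refine ⟨sq.lift k 0 hw, sq.lift_fst k 0 hw, ?_⟩
  set k' : K ⟶ P := sq.lift k 0 hw with hk'
  have hfst : k' ≫ fst = k := sq.lift_fst k 0 hw
  have hsnd : k' ≫ snd = 0 := sq.lift_snd k 0 hw
  have hmono : Mono k' := by
    have : Mono (k' ≫ fst) := by rw [hfst]; exact hmk
    exact mono_of_mono k' fst
  have hepi : Epi snd := by
    rw [← sq.isoPullback_hom_snd]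
    exact epi_comp _ _
  refine ses_mk_ker hsnd hmono hepi (KernelFork.IsLimit.ofι' k' hsnd ?_)
  intro T t ht
  have hcond : (t ≫ fst) ≫ f = 0 := by
    rw [Category.assoc, sq.w, ← Category.assoc, ht, zero_comp]
  have hu := (ses_lift_s18 hk (t ≫ fst) hcond).choose_spec
  refine ⟨(ses_lift_s18 hk (t ≫ fst) hcond).choose, sq.hom_ext ?_ ?_⟩
  · rw [Category.assoc, hfst, hu]
  · rw [Category.assoc, hsnd, comp_zero, ht]

lemma ses_pullback_comp {I M Y X Z P : 𝒜} {i : I ⟶ M} {π : M ⟶ Y} (h1 : IsShortExactSeq i π)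
    {f : X ⟶ Y} {g : Y ⟶ Z} (h2 : IsShortExactSeq f g)
    {fst : P ⟶ M} {snd : P ⟶ X} (sq : IsPullback fst snd π f) :
    IsShortExactSeq fst (π ≫ g) := by
  have hmf : Mono f := h2.mono_s18
  have hw : fst ≫ π ≫ g = 0 := by
    rw [← Category.assoc, sq.w, Category.assoc, h2.zero, comp_zero]
  have hmono : Mono fst := by
    have : Mono (pullback.fst π f) := inferInstance
    rw [← sq.isoPullback_hom_fst]
    exact mono_comp _ _
  have hepi : Epi (π ≫ g) := by
    have := h1.epi_s18
    have := h2.epi_s18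
    exact epi_comp _ _
  refine ses_mk_ker hw hmono hepi (KernelFork.IsLimit.ofι' fst hw ?_)
  intro T t ht
  have hc : (t ≫ π) ≫ g = 0 := by rw [Category.assoc]; exact ht
  have hw2 : t ≫ π = (ses_lift_s18 h2 (t ≫ π) hc).choose ≫ f :=
    (ses_lift_s18 h2 (t ≫ π) hc).choose_spec.symm
  exact ⟨sq.lift t _ hw2, sq.lift_fst t _ hw2⟩

lemma ses_of_splitting {S : ShortComplex 𝒜} (spl : S.Splitting) :
    IsShortExactSeq spl.s spl.r := by
  have hm : Mono spl.s := by
    have : Mono (spl.s ≫ S.g) := by rw [spl.s_g]; infer_instance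
    exact mono_of_mono spl.s S.g
  have he : Epi spl.r := by
    have : Epi (S.f ≫ spl.r) := by rw [spl.f_r]; infer_instance
    exact epi_of_epi S.f spl.r
  refine ses_mk spl.s_r hm he (CokernelCofork.IsColimit.ofπ' spl.r spl.s_r ?_)
  intro A t ht
  refine ⟨S.f ≫ t, ?_⟩
  rw [← Category.assoc, spl.r_f, Preadditive.sub_comp, Category.id_comp,
    Category.assoc, ht, comp_zero, sub_zero]

lemma ses_noether {A B C Y1 Y2 Y3 : 𝒜} {a : A ⟶ B} {p1 : B ⟶ Y1} (h1 : IsShortExactSeq a p1)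
    {b : B ⟶ C} {p2 : C ⟶ Y2} (h2 : IsShortExactSeq b p2)
    {p3 : C ⟶ Y3} (h3 : IsShortExactSeq (a ≫ b) p3) :
    ∃ (φ : Y1 ⟶ Y3) (ψ : Y3 ⟶ Y2), p1 ≫ φ = b ≫ p3 ∧ IsShortExactSeq φ ψ := by
  have hep1 : Epi p1 := h1.epi_s18
  have hep3 : Epi p3 := h3.epi_s18
  obtain ⟨φ, hφ⟩ := ses_desc_s18 h1 (b ≫ p3) (by rw [← Category.assoc, h3.zero])
  have sqw : b ≫ p3 = p1 ≫ φ := hφ.symm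
  have hcond : ∀ s : PushoutCocone b p1, (a ≫ b) ≫ s.inl = 0 := fun s => by
    rw [Category.assoc, s.condition, ← Category.assoc, h1.zero, zero_comp]
  have sq : IsPushout b p1 p3 φ := by
    refine IsPushout.of_isColimit (PushoutCocone.IsColimit.mk sqw
      (fun s => (ses_desc_s18 h3 s.inl (hcond s)).choose) ?_ ?_ ?_)
    · intro s
      exact (ses_desc_s18 h3 s.inl (hcond s)).choose_spec
    · intro s
      have hd := (ses_desc_s18 h3 s.inl (hcond s)).choose_spec
      rw [← cancel_epi p1, ← Category.assoc, ← sqw, Category.assoc, hd, s.condition]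
    · intro s m hm1 hm2
      rw [← cancel_epi p3]
      rw [hm1, (ses_desc_s18 h3 s.inl (hcond s)).choose_spec]
  obtain ⟨ψ, hψ, hses⟩ := ses_of_isPushout sq h2
  exact ⟨φ, ψ, hφ, hses⟩

lemma cc_ext_closed {E Cc Ip : 𝒜 → Prop}
    (hEext : ∀ ⦃X Y Z : 𝒜⦄ (f : X ⟶ Y) (g : Y ⟶ Z),
      IsShortExactSeq f g → E X → E Z → E Y)
    (hCP : IsCotorsionPair E Cc Ip)
    {X Y Z : 𝒜} {f : X ⟶ Y} {g : Y ⟶ Z} (hfg : IsShortExactSeq f g)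
    (hX : Cc X) (hZ : Cc Z) : Cc Y := by
  obtain ⟨hEX, hXort⟩ := (hCP.left_eq X).mp hX
  obtain ⟨hEZ, hZort⟩ := (hCP.left_eq Z).mp hZ
  have hEY : E Y := hEext f g hfg hEX hEZ
  refine (hCP.left_eq Y).mpr ⟨hEY, ?_⟩
  intro I hI M ι π hEM hse
  have hEI : E I := ((hCP.right_eq I).mp hI).1
  have sq : IsPullback (pullback.fst π f) (pullback.snd π f) π f :=
    IsPullback.of_hasPullback π f
  obtain ⟨k', hk'fst, hk'ses⟩ := ses_of_isPullback sq hse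
  have hEPb : E (pullback π f) := hEext k' _ hk'ses hEI hEX
  obtain ⟨ρ, hρ⟩ := hXort hI k' (pullback.snd π f) hEPb hk'ses
  obtain ⟨wks, hksSE⟩ := hk'ses
  have := hksSE.epi_g
  have spl := ShortComplex.Splitting.ofExactOfRetraction
    (ShortComplex.mk k' (pullback.snd π f) wks) hksSE.exact ρ hρ hksSE.epi_g
  have hsesSR : IsShortExactSeq spl.s spl.r := ses_of_splitting spl
  have hmt : Mono (spl.s ≫ pullback.fst π f) := by
    have heq : (spl.s ≫ pullback.fst π f) ≫ π = f := by
      rw [Category.assoc, sq.w, ← Category.assoc]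
      have : spl.s ≫ pullback.snd π f = 𝟙 X := spl.s_g
      rw [this, Category.id_comp]
    have : Mono ((spl.s ≫ pullback.fst π f) ≫ π) := by rw [heq]; exact hfg.mono_s18
    exact mono_of_mono _ π
  have hPBcomp : IsShortExactSeq (pullback.fst π f) (π ≫ g) :=
    ses_pullback_comp hse hfg sq
  obtain ⟨φ, ψ, hφ, hNses⟩ := ses_noether hsesSR hPBcomp
    (ses_coker (spl.s ≫ pullback.fst π f) hmt)
  have hEM' : E (cokernel (spl.s ≫ pullback.fst π f)) := hEext φ ψ hNses hEI hEZ
  obtain ⟨r', hr'⟩ := hZort hI φ ψ hEM' hNses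
  refine ⟨cokernel.π (spl.s ≫ pullback.fst π f) ≫ r', ?_⟩
  have hφeq : φ = ι ≫ cokernel.π (spl.s ≫ pullback.fst π f) := by
    have h0 : k' ≫ spl.r = 𝟙 I := spl.f_r
    calc φ = (k' ≫ spl.r) ≫ φ := by rw [h0, Category.id_comp]
    _ = k' ≫ (spl.r ≫ φ) := by rw [Category.assoc]
    _ = k' ≫ pullback.fst π f ≫ cokernel.π (spl.s ≫ pullback.fst π f) := by rw [hφ]
    _ = ι ≫ cokernel.π (spl.s ≫ pullback.fst π f) := by
        rw [← Category.assoc, hk'fst]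
  rw [← Category.assoc, ← hφeq, hr']

end AuxLemmas


/-- Assume `Cc` is closed under kernels of admissible
epimorphisms in `E`; `(Cc, Ip)` is a complete cotorsion pair in `E` with
`Ip ⊆ Zc`; `Zc ∩ Cc` has 2-out-of-3 for short exact sequences in `Cc`;
`Pp ⊆ Cc` is closed under extensions and under kernels of admissible
epimorphisms in `Cc`; `(Pp, Pperp)` is a complete cotorsion pair in the exact
category `Pp` with `Pperp ⊆ Zc`; and every object of `Cc` admits a finite
`Pp`-resolution.  Then every object of `Zc ∩ Cc` admits a finite resolution
with terms in `Zc ∩ Pp` and syzygies in `Zc`. -/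
theorem resolution_in_acyclics
    (E Cc Ip Zc Pp Pperp : 𝒜 → Prop)
    (hEiso : IsoClosed E) (hCiso : IsoClosed Cc) (hIiso : IsoClosed Ip)
    (hZiso : IsoClosed Zc) (hPiso : IsoClosed Pp) (hPperpiso : IsoClosed Pperp)
    (hEext : ∀ ⦃X Y Z : 𝒜⦄ (f : X ⟶ Y) (g : Y ⟶ Z),
      IsShortExactSeq f g → E X → E Z → E Y)
    (hZsubE : ∀ ⦃X⦄, Zc X → E X)
    (hCker : IsHereditaryCP E Cc)
    (hCP : IsCotorsionPair E Cc Ip) (hcomplete : IsCompleteCP E Cc Ip)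
    (hIsubZ : ∀ ⦃X⦄, Ip X → Zc X)
    (hZ23 : ∀ ⦃X Y Z : 𝒜⦄ (f : X ⟶ Y) (g : Y ⟶ Z), IsShortExactSeq f g →
      Cc X → Cc Y → Cc Z →
      ((Zc X → Zc Y → Zc Z) ∧ (Zc X → Zc Z → Zc Y) ∧ (Zc Y → Zc Z → Zc X)))
    (hPsubC : ∀ ⦃X⦄, Pp X → Cc X)
    (hPext : ∀ ⦃X Y Z : 𝒜⦄ (f : X ⟶ Y) (g : Y ⟶ Z), IsShortExactSeq f g →
      Pp X → Cc Y → Pp Z → Pp Y)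
    (hPker : ∀ ⦃X Y Z : 𝒜⦄ (f : X ⟶ Y) (g : Y ⟶ Z), IsShortExactSeq f g →
      Cc X → Pp Y → Pp Z → Pp X)
    (hPcp : IsCotorsionPair Pp Pp Pperp)
    (hPcomplete : IsCompleteCP Pp Pp Pperp)
    (hPperpZ : ∀ ⦃X⦄, Pperp X → Zc X)
    (hres : ∀ A, Cc A → ∃ n, HasResolution Pp Cc n A) :
    ∀ A, Zc A → Cc A →
      ∃ n, HasResolution (fun X => Zc X ∧ Pp X) Zc n A := by
  -- Key lemma: every object of `Cc` with a finite `Pp`-resolution embeds, with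
  -- cokernel in `Pp`, into an object of `Zc ∩ Cc` which has a finite resolution
  -- with terms in `Zc ∩ Pp` and syzygies in `Zc`.
  have M' : ∀ (n : ℕ) (K : 𝒜), HasResolution Pp Cc n K → Cc K →
      ∃ (K' Q : 𝒜) (j : K ⟶ K') (c : K' ⟶ Q), IsShortExactSeq j c ∧ Pp Q ∧
        Zc K' ∧ Cc K' ∧ ∃ m, HasResolution (fun X => Zc X ∧ Pp X) Zc m K' := by
    intro n K hr
    induction hr with
    | @base A B f hB hf =>
      intro _
      have hPA : Pp A := hPiso (asIso f) hB
      obtain ⟨W, Q, j, c, hW, hQ, hses⟩ := hPcomplete.1 A hPA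
      have hPW : Pp W := ((hPcp.right_eq W).mp hW).1
      have hZW : Zc W := hPperpZ hW
      exact ⟨W, Q, j, c, hses, hQ, hZW, hPsubC hPW, 0,
        HasResolution.base (𝟙 W) ⟨hZW, hPW⟩ inferInstance⟩
    | @step n A B L l p hB hL hses hrec ih =>
      intro hCA
      obtain ⟨L', QL, j, c, hsesjc, hQL, hZL', hCL', m, hresL'⟩ := ih hL
      have sq := IsPushout.of_hasPushout l j
      obtain ⟨e1, hinl1, hses1⟩ := ses_of_isPushout sq hses
      obtain ⟨e2, hinr2, hses2⟩ := ses_of_isPushout sq.flip hsesjc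
      have hCPo : Cc (pushout l j) := cc_ext_closed hEext hCP hses2 (hPsubC hB) (hPsubC hQL)
      have hPPo : Pp (pushout l j) := hPext _ e2 hses2 hB hCPo hQL
      obtain ⟨W, Q, m2, e3, hW, hQ, hsesW⟩ := hPcomplete.1 _ hPPo
      have hPW : Pp W := ((hPcp.right_eq W).mp hW).1
      have hZW : Zc W := hPperpZ hW
      have hmono : Mono (pushout.inr l j ≫ m2) := by
        have := hses1.mono_s18
        have := hsesW.mono_s18
        exact mono_comp _ _
      have hsesK' := ses_coker (pushout.inr l j ≫ m2) hmono
      obtain ⟨φ, ψ, hφ, hsesφψ⟩ := ses_noether hses1 hsesW hsesK'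
      have hCK' : Cc (cokernel (pushout.inr l j ≫ m2)) :=
        cc_ext_closed hEext hCP hsesφψ hCA (hPsubC hQ)
      have hZK' : Zc (cokernel (pushout.inr l j ≫ m2)) :=
        (hZ23 _ _ hsesK' hCL' (hPsubC hPW) hCK').1 hZL' hZW
      exact ⟨_, Q, φ, ψ, hsesφψ, hQ, hZK', hCK', m + 1,
        HasResolution.step _ _ ⟨hZW, hPW⟩ hZL' hsesK' hresL'⟩
  intro A hZA hCA
  obtain ⟨n, hr⟩ := hres A hCA
  cases hr with
  | @base A B f hB hf =>
    have hPA : Pp A := hPiso (asIso f) hB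
    exact ⟨0, HasResolution.base (𝟙 A) ⟨hZA, hPA⟩ inferInstance⟩
  | @step n A B K k g hB hK hses hrec =>
    obtain ⟨K', Q, j, c, hsesjc, hQ, hZK', hCK', m, hresK'⟩ := M' n K hrec hK
    have sq := IsPushout.of_hasPushout k j
    obtain ⟨e1, hinl1, hses1⟩ := ses_of_isPushout sq hses
    obtain ⟨e2, hinr2, hses2⟩ := ses_of_isPushout sq.flip hsesjc
    have hCPo : Cc (pushout k j) := cc_ext_closed hEext hCP hses2 (hPsubC hB) (hPsubC hQ)
    have hPPo : Pp (pushout k j) := hPext _ e2 hses2 hB hCPo hQ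
    have hZPo : Zc (pushout k j) :=
      (hZ23 _ _ hses1 hCK' hCPo hCA).2.1 hZK' hZA
    exact ⟨m + 1, HasResolution.step _ _ ⟨hZPo, hPPo⟩ hZK' hses1 hresK'⟩
end
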